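/- Let G = G₁ ⊗ G₂ be the join of two finite simple graphs, let k be a positive integer, and let f_s, f_t be extended k-colorings of G that are reconfigurable under color swapping. If the set of swappable colors of the restriction f_s¹ of f_s to V(G₁) is empty, or the set of swappable colors of the restriction f_s² of f_s to V(G₂) is empty, then in every reconfiguration sequence from f_s to f_t no color swap is performed on an edge joining a vertex of V(G₁) to a vertex of V(G₂). -/

import Mathlib

/-- An extended `k`-coloring of `G`: a map `V → {1,…,k} ∪ {∗}` (with `∗ = none`)
such that adjacent vertices get different colors unless both get `∗`. -/
def IsExtColoring {V : Type*} (G : SimpleGraph V) (k : ℕ) (f : V → Option ℕ) : Prop :=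
  (∀ v i, f v = some i → i ∈ Finset.Icc 1 k) ∧
    ∀ ⦃u w : V⦄, G.Adj u w → f u = f w → f u = none

/-- Two extended colorings are adjacent under color swapping: there is an edge
`uw` whose endpoint colors are exchanged, all other vertices keep their color,
and the two colorings are distinct. -/
def ExtCSAdj {V : Type*} (G : SimpleGraph V) (f f' : V → Option ℕ) : Prop :=
  f ≠ f' ∧ ∃ u w : V, G.Adj u w ∧ f u = f' w ∧ f w = f' u ∧
    ∀ x : V, x ≠ u → x ≠ w → f x = f' x

/-- One step of color-swapping reconfiguration between extended `k`-colorings. -/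
def ExtCSStep {V : Type*} (G : SimpleGraph V) (k : ℕ) (f f' : V → Option ℕ) : Prop :=
  IsExtColoring G k f ∧ IsExtColoring G k f' ∧ ExtCSAdj G f f'

/-- Two extended `k`-colorings are reconfigurable under color swapping. -/
def ExtReconf {V : Type*} (G : SimpleGraph V) (k : ℕ) :
    (V → Option ℕ) → (V → Option ℕ) → Prop :=
  Relation.ReflTransGen (ExtCSStep G k)

/-- The set of swappable colors of an extended coloring `f`: the colors used by
exactly one vertex, together with `∗` whenever some vertex is colored `∗`. -/
def swappableSet {V : Type*} (f : V → Option ℕ) : Set (Option ℕ) :=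
  {c | (∃! v, f v = c) ∨ (c = none ∧ ∃ v, f v = none)}

/-- The disjoint union `G₁ ⊕ G₂`. -/
def graphSum {V₁ V₂ : Type*} (G₁ : SimpleGraph V₁) (G₂ : SimpleGraph V₂) :
    SimpleGraph (V₁ ⊕ V₂) :=
  SimpleGraph.fromRel (fun x y =>
    match x, y with
    | Sum.inl u, Sum.inl v => G₁.Adj u v
    | Sum.inr u, Sum.inr v => G₂.Adj u v
    | _, _ => False)

/-- The join `G₁ ⊗ G₂`: the disjoint union together with all edges between the
two sides. -/
def graphJoin {V₁ V₂ : Type*} (G₁ : SimpleGraph V₁) (G₂ : SimpleGraph V₂) :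
    SimpleGraph (V₁ ⊕ V₂) :=
  SimpleGraph.fromRel (fun x y =>
    match x, y with
    | Sum.inl u, Sum.inl v => G₁.Adj u v
    | Sum.inr u, Sum.inr v => G₂.Adj u v
    | Sum.inl _, Sum.inr _ => True
    | Sum.inr _, Sum.inl _ => False)

/-- `l` is a reconfiguration sequence of extended `k`-colorings of `G` from `f`
to `f'`. -/
def IsReconfSeq {V : Type*} (G : SimpleGraph V) (k : ℕ)
    (l : List (V → Option ℕ)) (f f' : V → Option ℕ) : Prop :=
  l.head? = some f ∧ l.getLast? = some f' ∧
    (∀ g ∈ l, IsExtColoring G k g) ∧ l.Chain' (ExtCSAdj G)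

section Aux

open Classical in
lemma swappable_comp_equiv {V : Type*} (f : V → Option ℕ) (e : Equiv.Perm V) :
    swappableSet (f ∘ e) = swappableSet f := by
  ext c
  simp only [swappableSet, Set.mem_setOf_eq, Function.comp_apply]
  constructor
  · rintro (⟨v, hv, hu⟩ | ⟨hc, v, hv⟩)
    · refine Or.inl ⟨e v, hv, fun y hy => ?_⟩
      have h := hu (e.symm y) (by simpa using hy)
      have := congrArg e h
      simpa using this
    · exact Or.inr ⟨hc, e v, hv⟩
  · rintro (⟨v, hv, hu⟩ | ⟨hc, v, hv⟩)
    · refine Or.inl ⟨e.symm v, by simpa using hv, fun y hy => ?_⟩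
      have h := hu (e y) hy
      have := congrArg e.symm h
      simpa using this
    · exact Or.inr ⟨hc, e.symm v, by simpa using hv⟩

lemma join_adj_cross {V₁ V₂ : Type*} (G₁ : SimpleGraph V₁) (G₂ : SimpleGraph V₂)
    (u : V₁) (v : V₂) : (graphJoin G₁ G₂).Adj (Sum.inl u) (Sum.inr v) := by
  rw [graphJoin, SimpleGraph.fromRel_adj]
  exact ⟨by simp, Or.inl trivial⟩

variable {V₁ V₂ : Type*} {G₁ : SimpleGraph V₁} {G₂ : SimpleGraph V₂} {k : ℕ}

lemma step_left {g g' : V₁ ⊕ V₂ → Option ℕ}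
    (hg' : IsExtColoring (graphJoin G₁ G₂) k g')
    (hadj : ExtCSAdj (graphJoin G₁ G₂) g g')
    (hS : swappableSet (g ∘ Sum.inl) = ∅) :
    (¬ ∃ (u : V₁) (v : V₂),
        g (Sum.inl u) ≠ g' (Sum.inl u) ∧ g (Sum.inr v) ≠ g' (Sum.inr v)) ∧
      swappableSet (g' ∘ Sum.inl) = ∅ := by
  classical
  obtain ⟨-, u, w, huw, h1, h2, hfix⟩ := hadj
  cases u with
  | inl a =>
    cases w with
    | inl b =>
      constructor
      · rintro ⟨x, y, -, hy⟩
        exact hy (hfix (Sum.inr y) (by simp) (by simp))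
      · have hab : a ≠ b := fun h => huw.ne (congrArg Sum.inl h)
        have hcomp : g' ∘ Sum.inl = (g ∘ Sum.inl) ∘ (Equiv.swap a b) := by
          funext x
          simp only [Function.comp_apply]
          by_cases hx1 : x = a
          · subst hx1
            rw [Equiv.swap_apply_left]
            exact h2.symm
          · by_cases hx2 : x = b
            · subst hx2
              rw [Equiv.swap_apply_right]
              exact h1.symm
            · rw [Equiv.swap_apply_of_ne_of_ne hx1 hx2]
              exact (hfix (Sum.inl x) (by simpa using hx1) (by simpa using hx2)).symm
        rw [hcomp, swappable_comp_equiv]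
        exact hS
    | inr b =>
      exfalso
      have hmem : g (Sum.inl a) ∈ swappableSet (g ∘ Sum.inl) := by
        simp only [swappableSet, Set.mem_setOf_eq, Function.comp_apply]
        by_cases hc : g (Sum.inl a) = none
        · exact Or.inr ⟨hc, a, hc⟩
        · refine Or.inl ⟨a, rfl, fun y hy => ?_⟩
          by_contra hya
          have hy' : g' (Sum.inl y) = g (Sum.inl a) := by
            rw [← hfix (Sum.inl y) (by simpa using hya) (by simp)]
            exact hy
          have hb' : g' (Sum.inr b) = g (Sum.inl a) := h1.symm
          have hnone := hg'.2 (join_adj_cross G₁ G₂ y b) (by rw [hy', hb'])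
          rw [hy'] at hnone
          exact hc hnone
      rw [hS] at hmem
      exact hmem
  | inr a =>
    cases w with
    | inl b =>
      exfalso
      have hmem : g (Sum.inl b) ∈ swappableSet (g ∘ Sum.inl) := by
        simp only [swappableSet, Set.mem_setOf_eq, Function.comp_apply]
        by_cases hc : g (Sum.inl b) = none
        · exact Or.inr ⟨hc, b, hc⟩
        · refine Or.inl ⟨b, rfl, fun y hy => ?_⟩
          by_contra hyb
          have hy' : g' (Sum.inl y) = g (Sum.inl b) := by
            rw [← hfix (Sum.inl y) (by simp) (by simpa using hyb)]
            exact hy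
          have ha' : g' (Sum.inr a) = g (Sum.inl b) := h2.symm
          have hnone := hg'.2 (join_adj_cross G₁ G₂ y a) (by rw [hy', ha'])
          rw [hy'] at hnone
          exact hc hnone
      rw [hS] at hmem
      exact hmem
    | inr b =>
      have hL : g ∘ Sum.inl = g' ∘ Sum.inl := by
        funext x
        exact hfix (Sum.inl x) (by simp) (by simp)
      constructor
      · rintro ⟨x, y, hx, -⟩
        exact hx (congrFun hL x)
      · rw [← hL]
        exact hS

lemma step_right {g g' : V₁ ⊕ V₂ → Option ℕ}
    (hg' : IsExtColoring (graphJoin G₁ G₂) k g')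
    (hadj : ExtCSAdj (graphJoin G₁ G₂) g g')
    (hS : swappableSet (g ∘ Sum.inr) = ∅) :
    (¬ ∃ (u : V₁) (v : V₂),
        g (Sum.inl u) ≠ g' (Sum.inl u) ∧ g (Sum.inr v) ≠ g' (Sum.inr v)) ∧
      swappableSet (g' ∘ Sum.inr) = ∅ := by
  classical
  obtain ⟨-, u, w, huw, h1, h2, hfix⟩ := hadj
  cases u with
  | inl a =>
    cases w with
    | inl b =>
      have hR : g ∘ Sum.inr = g' ∘ Sum.inr := by
        funext x
        exact hfix (Sum.inr x) (by simp) (by simp)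
      constructor
      · rintro ⟨x, y, -, hy⟩
        exact hy (congrFun hR y)
      · rw [← hR]
        exact hS
    | inr b =>
      exfalso
      have hmem : g (Sum.inr b) ∈ swappableSet (g ∘ Sum.inr) := by
        simp only [swappableSet, Set.mem_setOf_eq, Function.comp_apply]
        by_cases hc : g (Sum.inr b) = none
        · exact Or.inr ⟨hc, b, hc⟩
        · refine Or.inl ⟨b, rfl, fun y hy => ?_⟩
          by_contra hyb
          have hy' : g' (Sum.inr y) = g (Sum.inr b) := by
            rw [← hfix (Sum.inr y) (by simp) (by simpa using hyb)]
            exact hy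
          have ha' : g' (Sum.inl a) = g (Sum.inr b) := h2.symm
          have hnone := hg'.2 (join_adj_cross G₁ G₂ a y) (by rw [hy', ha'])
          rw [ha'] at hnone
          exact hc hnone
      rw [hS] at hmem
      exact hmem
  | inr a =>
    cases w with
    | inl b =>
      exfalso
      have hmem : g (Sum.inr a) ∈ swappableSet (g ∘ Sum.inr) := by
        simp only [swappableSet, Set.mem_setOf_eq, Function.comp_apply]
        by_cases hc : g (Sum.inr a) = none
        · exact Or.inr ⟨hc, a, hc⟩
        · refine Or.inl ⟨a, rfl, fun y hy => ?_⟩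
          by_contra hya
          have hy' : g' (Sum.inr y) = g (Sum.inr a) := by
            rw [← hfix (Sum.inr y) (by simpa using hya) (by simp)]
            exact hy
          have hb' : g' (Sum.inl b) = g (Sum.inr a) := h1.symm
          have hnone := hg'.2 (join_adj_cross G₁ G₂ b y) (by rw [hy', hb'])
          rw [hb'] at hnone
          exact hc hnone
      rw [hS] at hmem
      exact hmem
    | inr b =>
      constructor
      · rintro ⟨x, y, hx, -⟩
        exact hx (hfix (Sum.inl x) (by simp) (by simp))
      · have hab : a ≠ b := fun h => huw.ne (congrArg Sum.inr h)
        have hcomp : g' ∘ Sum.inr = (g ∘ Sum.inr) ∘ (Equiv.swap a b) := by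
          funext x
          simp only [Function.comp_apply]
          by_cases hx1 : x = a
          · subst hx1
            rw [Equiv.swap_apply_left]
            exact h2.symm
          · by_cases hx2 : x = b
            · subst hx2
              rw [Equiv.swap_apply_right]
              exact h1.symm
            · rw [Equiv.swap_apply_of_ne_of_ne hx1 hx2]
              exact (hfix (Sum.inr x) (by simpa using hx1) (by simpa using hx2)).symm
        rw [hcomp, swappable_comp_equiv]
        exact hS

lemma step_both {g g' : V₁ ⊕ V₂ → Option ℕ}
    (hg' : IsExtColoring (graphJoin G₁ G₂) k g')
    (hadj : ExtCSAdj (graphJoin G₁ G₂) g g')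
    (hS : swappableSet (g ∘ Sum.inl) = ∅ ∨ swappableSet (g ∘ Sum.inr) = ∅) :
    (¬ ∃ (u : V₁) (v : V₂),
        g (Sum.inl u) ≠ g' (Sum.inl u) ∧ g (Sum.inr v) ≠ g' (Sum.inr v)) ∧
      (swappableSet (g' ∘ Sum.inl) = ∅ ∨ swappableSet (g' ∘ Sum.inr) = ∅) := by
  rcases hS with h | h
  · obtain ⟨h1, h2⟩ := step_left hg' hadj h
    exact ⟨h1, Or.inl h2⟩
  · obtain ⟨h1, h2⟩ := step_right hg' hadj h
    exact ⟨h1, Or.inr h2⟩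

lemma chain_aux :
    ∀ l : List (V₁ ⊕ V₂ → Option ℕ),
      (∀ g ∈ l, IsExtColoring (graphJoin G₁ G₂) k g) →
      l.Chain' (ExtCSAdj (graphJoin G₁ G₂)) →
      (∀ g, l.head? = some g →
        swappableSet (g ∘ Sum.inl) = ∅ ∨ swappableSet (g ∘ Sum.inr) = ∅) →
      l.Chain' (fun g g' => ¬ ∃ (u : V₁) (v : V₂),
        g (Sum.inl u) ≠ g' (Sum.inl u) ∧ g (Sum.inr v) ≠ g' (Sum.inr v))
  | [], _, _, _ => List.isChain_nil
  | [_], _, _, _ => List.isChain_singleton _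
  | g :: g' :: rest, hcol, hchain, hinv => by
    simp only [List.Chain', List.isChain_cons_cons] at hchain ⊢
    have hg' : IsExtColoring (graphJoin G₁ G₂) k g' := hcol g' (by simp)
    have step := step_both hg' hchain.1 (hinv g rfl)
    refine ⟨step.1, chain_aux (g' :: rest) ?_ hchain.2 ?_⟩
    · intro x hx
      exact hcol x (List.mem_cons_of_mem _ hx)
    · intro x hx
      rw [List.head?_cons, Option.some_inj] at hx
      subst hx
      exact step.2

end Aux

/-- in a join, if the swappable set of (the restriction of) `f_s`
to one side is empty, then no reconfiguration sequence from `f_s` to `f_t` ever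
performs a color swap on an edge joining the two sides (a cross swap changes a
vertex on each side). -/


theorem stmt_13 {V₁ V₂ : Type*} [Fintype V₁] [Fintype V₂]
    (G₁ : SimpleGraph V₁) (G₂ : SimpleGraph V₂) (k : ℕ) (hk : 1 ≤ k)
    (fs ft : V₁ ⊕ V₂ → Option ℕ)
    (hfs : IsExtColoring (graphJoin G₁ G₂) k fs)
    (hft : IsExtColoring (graphJoin G₁ G₂) k ft)
    (hrec : ExtReconf (graphJoin G₁ G₂) k fs ft)
    (hempty : swappableSet (fs ∘ Sum.inl) = ∅ ∨ swappableSet (fs ∘ Sum.inr) = ∅) :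
    ∀ l : List (V₁ ⊕ V₂ → Option ℕ), IsReconfSeq (graphJoin G₁ G₂) k l fs ft →
      l.Chain' (fun g g' => ¬ ∃ (u : V₁) (v : V₂),
        g (Sum.inl u) ≠ g' (Sum.inl u) ∧ g (Sum.inr v) ≠ g' (Sum.inr v)) := by
  intro l hl
  obtain ⟨hhead, -, hcol, hchain⟩ := hl
  refine chain_aux l hcol hchain ?_
  intro g hg
  rw [hhead, Option.some_inj] at hg
  subst hg
  exact hempty
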